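/- arXiv:2206.09338 — 2 statements merged into one kernel-verified Lean document; each statement's English description precedes it below -/
import Mathlib

section
/- Let I ⊂ ℝ be an interval and let E, G : I → ℂ^{n×n} and F, c : I → ℝ be functions such that for all t ∈ I: ‖E(t)‖_F = 1, E is differentiable with E'(t) = −G(t) + Re⟨G(t), E(t)⟩ · E(t), F is differentiable with F'(t) = c(t) · Re⟨G(t), E'(t)⟩, and c(t) > 0. Then F'(t) ≤ 0 for all t ∈ I; in fact c(t)⁻¹ F'(t) = −‖G(t)‖_F² + (Re⟨G(t), E(t)⟩)² ≤ 0. -/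
open Matrix

/-- Frobenius inner product `⟨X,Y⟩ = tr(X*Y) = Σᵢⱼ conj(Xᵢⱼ) Yᵢⱼ` on complex matrices. -/
noncomputable def frobInner {n : ℕ} (X Y : Matrix (Fin n) (Fin n) ℂ) : ℂ :=
  ∑ i, ∑ j, (starRingEnd ℂ) (X i j) * Y i j

/-- Frobenius norm. -/
noncomputable def frobNorm {n : ℕ} (X : Matrix (Fin n) (Fin n) ℂ) : ℝ :=
  Real.sqrt (frobInner X X).re

noncomputable def toE {n : ℕ} (X : Matrix (Fin n) (Fin n) ℂ) :
    EuclideanSpace ℂ (Fin n × Fin n) := WithLp.toLp 2 (fun p : Fin n × Fin n => X p.1 p.2)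

lemma frobInner_eq {n : ℕ} (X Y : Matrix (Fin n) (Fin n) ℂ) :
    frobInner X Y = inner ℂ (toE X) (toE Y) := by
  rw [PiLp.inner_apply]
  simp [frobInner, toE, RCLike.inner_apply, Fintype.sum_prod_type]
  exact Finset.sum_congr rfl fun _ _ => Finset.sum_congr rfl fun _ _ => mul_comm _ _

lemma frobNorm_eq {n : ℕ} (X : Matrix (Fin n) (Fin n) ℂ) :
    frobNorm X = ‖toE X‖ := by
  rw [frobNorm, frobInner_eq, @norm_eq_sqrt_re_inner ℂ]
  rfl

/-- Monotonicity along the norm-constrained gradient flow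
`E' = -G + Re⟨G,E⟩E`: if `F' = c · Re⟨G,E'⟩` with `c > 0`, then
`c⁻¹ F' = -‖G‖² + (Re⟨G,E⟩)² ≤ 0`, so `F' ≤ 0`. -/
theorem gradient_flow_monotonicity
    {n : ℕ} (I : Set ℝ)
    (E E' G : ℝ → Matrix (Fin n) (Fin n) ℂ) (F c : ℝ → ℝ)
    (hnorm : ∀ t ∈ I, frobNorm (E t) = 1)
    (hEder : ∀ t ∈ I, ∀ i j, HasDerivAt (fun s => E s i j) (E' t i j) t)
    (hode : ∀ t ∈ I, E' t = -(G t) + (frobInner (G t) (E t)).re • E t)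
    (hF : ∀ t ∈ I, HasDerivAt F (c t * (frobInner (G t) (E' t)).re) t)
    (hc : ∀ t ∈ I, 0 < c t) :
    ∀ t ∈ I,
      (c t)⁻¹ * deriv F t = -(frobNorm (G t)) ^ 2 + ((frobInner (G t) (E t)).re) ^ 2 ∧
      deriv F t ≤ 0 := by
  intro t ht
  have hd : deriv F t = c t * (frobInner (G t) (E' t)).re := (hF t ht).deriv
  set r : ℝ := (frobInner (G t) (E t)).re with hr
  have hE' : toE (E' t) = -(toE (G t)) + (r : ℂ) • toE (E t) := by
    ext p
    simp [toE, hode t ht, Matrix.add_apply, Matrix.smul_apply, Matrix.neg_apply]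
    exact Or.inl rfl
  have key : (frobInner (G t) (E' t)).re = -(frobNorm (G t))^2 + r^2 := by
    rw [frobInner_eq, hE', inner_add_right, inner_neg_right, inner_smul_right]
    have h1 : (inner ℂ (toE (G t)) (toE (G t)) : ℂ).re = (frobNorm (G t))^2 := by
      rw [frobNorm_eq]
      rw [← @inner_self_eq_norm_sq ℂ]
      simp
    have h2 : (inner ℂ (toE (G t)) (toE (E t)) : ℂ) = frobInner (G t) (E t) := (frobInner_eq _ _).symm
    have h3 : ((r : ℂ) * inner ℂ (toE (G t)) (toE (E t))).re = r * r := by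
      rw [Complex.re_ofReal_mul, h2, ← hr]
    simp only [Complex.add_re, Complex.neg_re, h1, h3, sq]
  have hineq : r^2 ≤ (frobNorm (G t))^2 := by
    have hcs : ‖(inner ℂ (toE (G t)) (toE (E t)) : ℂ)‖ ≤ ‖toE (G t)‖ * ‖toE (E t)‖ :=
      norm_inner_le_norm _ _
    have hE1 : ‖toE (E t)‖ = 1 := by rw [← frobNorm_eq]; exact hnorm t ht
    have habs : |r| ≤ frobNorm (G t) := by
      calc |r| ≤ ‖(inner ℂ (toE (G t)) (toE (E t)) : ℂ)‖ := by
            rw [hr, frobInner_eq]; exact Complex.abs_re_le_norm _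
        _ ≤ ‖toE (G t)‖ * ‖toE (E t)‖ := hcs
        _ = frobNorm (G t) := by rw [hE1, mul_one, frobNorm_eq]
    calc r^2 = |r|^2 := (sq_abs r).symm
      _ ≤ (frobNorm (G t))^2 := by
          apply sq_le_sq' <;> nlinarith [abs_nonneg r, Real.sqrt_nonneg (frobInner (G t) (G t)).re]
  constructor
  · rw [hd, ← mul_assoc, inv_mul_cancel₀ (hc t ht).ne', one_mul, key]
  · rw [hd, key]
    have : -(frobNorm (G t))^2 + r^2 ≤ 0 := by linarith
    exact mul_nonpos_of_nonneg_of_nonpos (hc t ht).le this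
end

section
/- Let S be a real-linear subspace of ℂ^{n×n} with orthogonal projection Π^S. Let x, y ∈ ℂⁿ be unit vectors, c ∈ ℂ with c ≠ 0, and G = c · x y*. Let μ ∈ ℝ with μ ≠ 0 and set E = μ⁻¹ · Π^S G; assume ‖E‖_F = 1. Set Y = μ⁻¹ · G (a rank-one matrix) and define P_Y(Z) = Z − (I − x x*) Z (I − y y*). Then −P_Y(G) + Re⟨P_Y(G), E⟩ · Y = 0, i.e. Y is a stationary point of the rank-1 projected differential equation Ẏ = −P_Y G + Re⟨P_Y G, Π^S Y⟩ Y. -/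
open Matrix

lemma frobInner_smul_right {n : ℕ} (X Y : Matrix (Fin n) (Fin n) ℂ) (r : ℝ) :
    frobInner X (r • Y) = (r : ℂ) * frobInner X Y := by
  simp [frobInner, Finset.mul_sum, Complex.real_smul, mul_left_comm]

lemma frobInner_smul_left {n : ℕ} (X Y : Matrix (Fin n) (Fin n) ℂ) (r : ℝ) :
    frobInner (r • X) Y = (r : ℂ) * frobInner X Y := by
  simp only [frobInner, Matrix.smul_apply, Complex.real_smul, Finset.mul_sum]
  refine Finset.sum_congr rfl fun i _ => Finset.sum_congr rfl fun j _ => ?_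
  rw [_root_.map_mul, Complex.conj_ofReal]; ring

lemma frobInner_self_nonneg {n : ℕ} (X : Matrix (Fin n) (Fin n) ℂ) :
    0 ≤ (frobInner X X).re := by
  simp only [frobInner, Complex.re_sum]
  refine Finset.sum_nonneg fun i _ => Finset.sum_nonneg fun j _ => ?_
  rw [← Complex.normSq_eq_conj_mul_self]
  exact Complex.normSq_nonneg _

/-- If `E = μ⁻¹ Π^S G` is a stationary point of the structure-constrained gradient system
(`G = c·x y*`, `μ ≠ 0` real, `‖E‖_F = 1`), then `Y = μ⁻¹ G ∈ M₁` is a stationary point of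
the rank-1 projected differential equation: `-P_Y(G) + Re⟨P_Y(G), E⟩·Y = 0`. -/
theorem gradient_stationary_to_rank_one_stationary
    {n : ℕ} (S : Submodule ℝ (Matrix (Fin n) (Fin n) ℂ))
    (P : Matrix (Fin n) (Fin n) ℂ →ₗ[ℝ] Matrix (Fin n) (Fin n) ℂ)
    (hPmem : ∀ Z, P Z ∈ S)
    (hPproj : ∀ Z, ∀ W ∈ S, (frobInner (P Z) W).re = (frobInner Z W).re)
    (x y : Fin n → ℂ) (hx : star x ⬝ᵥ x = 1) (hy : star y ⬝ᵥ y = 1)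
    (c : ℂ) (hc : c ≠ 0) (μ : ℝ) (hμ : μ ≠ 0)
    (G E Y : Matrix (Fin n) (Fin n) ℂ)
    (hG : G = c • vecMulVec x (star y))
    (hE : E = μ⁻¹ • P G) (hEnorm : frobNorm E = 1)
    (hY : Y = μ⁻¹ • G)
    (PY : Matrix (Fin n) (Fin n) ℂ → Matrix (Fin n) (Fin n) ℂ)
    (hPY : ∀ Z, PY Z = Z - (1 - vecMulVec x (star x)) * Z * (1 - vecMulVec y (star y))) :
    -(PY G) + (frobInner (PY G) E).re • Y = 0 := by
  -- (1 - xx*) * G = 0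
  have hx' : ∑ k, star (x k) * x k = 1 := by
    simpa [dotProduct] using hx
  have key : vecMulVec x (star x) * vecMulVec x (star y) = vecMulVec x (star y) := by
    ext i j
    simp only [Matrix.mul_apply, vecMulVec_apply, Pi.star_apply]
    have h2 : ∑ k, x i * star (x k) * (x k * star (y j))
        = x i * star (y j) * ∑ k, star (x k) * x k := by
      rw [Finset.mul_sum]
      exact Finset.sum_congr rfl fun k _ => by ring
    rw [h2, hx', mul_one]
  have hxxG : (1 - vecMulVec x (star x)) * G = 0 := by
    rw [hG, Matrix.sub_mul, Matrix.one_mul, Matrix.mul_smul, key, sub_self]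
  have hPYG : PY G = G := by
    rw [hPY, hxxG]; simp
  have hn : (frobInner E E).re = 1 := by
    have h0 := frobInner_self_nonneg E
    have := hEnorm
    unfold frobNorm at this
    nlinarith [Real.sq_sqrt h0, Real.sqrt_nonneg (frobInner E E).re]
  -- ⟨PG,PG⟩.re = μ²
  have hPG2 : (frobInner (P G) (P G)).re = μ ^ 2 := by
    have : frobInner E E = ((μ⁻¹ : ℝ) : ℂ) * (((μ⁻¹ : ℝ) : ℂ) * frobInner (P G) (P G)) := by
      rw [hE, frobInner_smul_left, frobInner_smul_right]
    rw [this] at hn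
    have hre : (((μ⁻¹:ℝ):ℂ) * (((μ⁻¹:ℝ):ℂ) * frobInner (P G) (P G))).re
        = μ⁻¹ * (μ⁻¹ * (frobInner (P G) (P G)).re) := by
      simp [Complex.mul_re]
    rw [hre] at hn
    field_simp at hn
    nlinarith [hn]
  have hGE : (frobInner G E).re = μ := by
    have h1 : (frobInner G (P G)).re = μ ^ 2 := by
      rw [← hPproj G (P G) (hPmem G)]; exact hPG2
    have : (frobInner G E).re = μ⁻¹ * (frobInner G (P G)).re := by
      rw [hE, frobInner_smul_right]
      simp [Complex.mul_re]
    rw [this, h1]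
    field_simp
  rw [hPYG, hGE, hY]
  rw [smul_smul]
  rw [mul_inv_cancel₀ hμ]
  simp
end
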